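/- Let triangle ABC have side lengths a = |BC|, b = |CA|, c = |AB| and let X be an interior point with ∠BXC = ψ_a, ∠CXA = ψ_b, ∠AXB = ψ_c = 2π − ψ_a − ψ_b. Then, with Θ² = √((a+b+c)(a+c−b)(b+c−a)(a+b−c)), the distance c' = |CX| satisfies (c')² = [ (1/4)((1 − cot ψ_a cot ψ_b)Θ² − (cot ψ_a + cot ψ_b)(a² + b² − c²))² ] / [ c² + a² cot²ψ_a + b² cot²ψ_b + cot ψ_a cot ψ_b (a² + b² − c²) − (cot ψ_a + cot ψ_b)Θ² ]. -/

import Mathlib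

open EuclideanGeometry

lemma alg_key (P Q R x y z l m t : ℝ) (hz : z ≠ 0) (hl : l ≠ 0) (hm : m ≠ 0) (ht : t ≠ 0)
    (h1 : y * z = P ^ 2 + l ^ 2 * t ^ 2)
    (h2 : z * x = Q ^ 2 + m ^ 2 * t ^ 2)
    (h5 : z * R = P * Q - l * m * t ^ 2)
    (hs : l * Q + m * P + (1 - l - m) * z = 0)
    (hden : (x + y - 2 * R) + (y + z - 2 * P) * (P / (l * t)) ^ 2 +
        (z + x - 2 * Q) * (Q / (m * t)) ^ 2 +
        (P / (l * t)) * (Q / (m * t)) *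
          ((y + z - 2 * P) + (z + x - 2 * Q) - ((x + y - 2 * R))) -
        ((P / (l * t)) + (Q / (m * t))) * (2 * t) ≠ 0) :
    z = (1 / 4) * ((1 - (P / (l * t)) * (Q / (m * t))) * (2 * t) -
          ((P / (l * t)) + (Q / (m * t))) *
            ((y + z - 2 * P) + (z + x - 2 * Q) - ((x + y - 2 * R)))) ^ 2 /
        ((x + y - 2 * R) + (y + z - 2 * P) * (P / (l * t)) ^ 2 +
          (z + x - 2 * Q) * (Q / (m * t)) ^ 2 +
          (P / (l * t)) * (Q / (m * t)) *
            ((y + z - 2 * P) + (z + x - 2 * Q) - ((x + y - 2 * R))) -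
          ((P / (l * t)) + (Q / (m * t))) * (2 * t)) := by
  have hy : y = (P ^ 2 + l ^ 2 * t ^ 2) / z := by
    field_simp; linear_combination h1
  have hx : x = (Q ^ 2 + m ^ 2 * t ^ 2) / z := by
    field_simp; linear_combination h2
  have hR : R = (P * Q - l * m * t ^ 2) / z := by
    field_simp; linear_combination h5
  subst hy hx hR
  have hQ : Q = (-(m * P) - (1 - l - m) * z) / l := by
    field_simp; linarith
  subst hQ
  rw [eq_div_iff hden]
  field_simp
  ring

lemma cr_vw (u1 u2 v1 v2 w1 w2 l m n : ℝ) (hn : n ≠ 0) (hs : l + m + n = 1)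
    (h1 : l * u1 + m * v1 + n * w1 = 0) (h2 : l * u2 + m * v2 + n * w2 = 0) :
    v1 * w2 - v2 * w1 =
      l * (u1 * v2 - u2 * v1 + (v1 * w2 - v2 * w1) + (w1 * u2 - w2 * u1)) := by
  have e1 : w1 = -(l * u1 + m * v1) / n := by field_simp; linear_combination h1
  have e2 : w2 = -(l * u2 + m * v2) / n := by field_simp; linear_combination h2
  have e3 : n = 1 - l - m := by linarith
  subst e1 e2 e3
  field_simp
  ring

lemma cr_wu (u1 u2 v1 v2 w1 w2 l m n : ℝ) (hn : n ≠ 0) (hs : l + m + n = 1)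
    (h1 : l * u1 + m * v1 + n * w1 = 0) (h2 : l * u2 + m * v2 + n * w2 = 0) :
    w1 * u2 - w2 * u1 =
      m * (u1 * v2 - u2 * v1 + (v1 * w2 - v2 * w1) + (w1 * u2 - w2 * u1)) := by
  have e1 : w1 = -(l * u1 + m * v1) / n := by field_simp; linear_combination h1
  have e2 : w2 = -(l * u2 + m * v2) / n := by field_simp; linear_combination h2
  have e3 : n = 1 - l - m := by linarith
  subst e1 e2 e3
  field_simp
  ring

theorem interior_point_distance_formula (A B C X : EuclideanSpace ℝ (Fin 2))
    (a b c Θ2 ψa ψb : ℝ)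
    (hABC : AffineIndependent ℝ ![A, B, C])
    (hX : X ∈ interior (convexHull ℝ {A, B, C}))
    (ha : a = dist B C) (hb : b = dist C A) (hc : c = dist A B)
    (hψa : ∠ B X C = ψa) (hψb : ∠ C X A = ψb)
    (hψa1 : Real.pi / 2 < ψa) (hψa2 : ψa < Real.pi)
    (hψb1 : Real.pi / 2 < ψb) (hψb2 : ψb < Real.pi)
    (hΘ : Θ2 = Real.sqrt ((a + b + c) * (a + c - b) * (b + c - a) * (a + b - c)))
    (hden : c ^ 2 + a ^ 2 * Real.cot ψa ^ 2 + b ^ 2 * Real.cot ψb ^ 2 +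
        Real.cot ψa * Real.cot ψb * (a ^ 2 + b ^ 2 - c ^ 2) -
        (Real.cot ψa + Real.cot ψb) * Θ2 ≠ 0) :
    (dist C X) ^ 2 =
      (1 / 4) * ((1 - Real.cot ψa * Real.cot ψb) * Θ2 -
          (Real.cot ψa + Real.cot ψb) * (a ^ 2 + b ^ 2 - c ^ 2)) ^ 2 /
        (c ^ 2 + a ^ 2 * Real.cot ψa ^ 2 + b ^ 2 * Real.cot ψb ^ 2 +
          Real.cot ψa * Real.cot ψb * (a ^ 2 + b ^ 2 - c ^ 2) -
          (Real.cot ψa + Real.cot ψb) * Θ2) := by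
  -- basic coordinate tools
  have normsq : ∀ v : EuclideanSpace ℝ (Fin 2), ‖v‖ ^ 2 = v 0 ^ 2 + v 1 ^ 2 := by
    intro v
    rw [EuclideanSpace.norm_eq, Real.sq_sqrt (by positivity)]
    simp [Fin.sum_univ_two, sq_abs]
  have innereq : ∀ v w : EuclideanSpace ℝ (Fin 2),
      (inner ℝ v w : ℝ) = v 0 * w 0 + v 1 * w 1 := by
    intro v w
    simp [PiLp.inner_apply, Fin.sum_univ_two, RCLike.inner_apply, conj_trivial, mul_comm]
  have hsub : ∀ (v w : EuclideanSpace ℝ (Fin 2)) (i : Fin 2), (v - w) i = v i - w i := by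
    intro v w i; rfl
  -- barycentric coordinates
  have hspan : affineSpan ℝ (Set.range ![A, B, C]) = ⊤ := by
    rw [hABC.affineSpan_eq_top_iff_card_eq_finrank_add_one]
    simp [finrank_euclideanSpace]
  let bb : AffineBasis (Fin 3) ℝ (EuclideanSpace ℝ (Fin 2)) := ⟨![A, B, C], hABC, hspan⟩
  have hrange : Set.range (bb : Fin 3 → EuclideanSpace ℝ (Fin 2)) = {A, B, C} := by
    show Set.range ![A, B, C] = _
    simp only [Matrix.range_cons, Matrix.range_empty, Set.union_empty, Set.union_singleton]
    ext p; simp [or_comm, or_left_comm]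
  rw [← hrange, bb.interior_convexHull] at hX
  have hl0 : 0 < bb.coord 0 X := hX 0
  have hm0 : 0 < bb.coord 1 X := hX 1
  have hn0 : 0 < bb.coord 2 X := hX 2
  have hsum : bb.coord 0 X + bb.coord 1 X + bb.coord 2 X = 1 := by
    have := bb.sum_coord_apply_eq_one X
    rwa [Fin.sum_univ_three] at this
  have hcomb : bb.coord 0 X • A + bb.coord 1 X • B + bb.coord 2 X • C = X := by
    have := bb.linear_combination_coord_eq_self X
    rw [Fin.sum_univ_three] at this
    exact this
  have hXj : ∀ j : Fin 2,
      bb.coord 0 X * A j + bb.coord 1 X * B j + bb.coord 2 X * C j = X j := by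
    intro j
    have h := congrArg (fun f : EuclideanSpace ℝ (Fin 2) => f j) hcomb
    simpa [PiLp.smul_apply, smul_eq_mul] using h
  have hrel1 : bb.coord 0 X * (A 0 - X 0) + bb.coord 1 X * (B 0 - X 0) + bb.coord 2 X * (C 0 - X 0) = 0 := by
    linear_combination hXj 0 - X 0 * hsum
  have hrel2 : bb.coord 0 X * (A 1 - X 1) + bb.coord 1 X * (B 1 - X 1) + bb.coord 2 X * (C 1 - X 1) = 0 := by
    linear_combination hXj 1 - X 1 * hsum
  have hcrvw : ((B 0 - X 0) * (C 1 - X 1) - (B 1 - X 1) * (C 0 - X 0)) = bb.coord 0 X * ((A 0 - X 0) * (B 1 - X 1) - (A 1 - X 1) * (B 0 - X 0) + ((B 0 - X 0) * (C 1 - X 1) - (B 1 - X 1) * (C 0 - X 0)) + ((C 0 - X 0) * (A 1 - X 1) - (C 1 - X 1) * (A 0 - X 0))) :=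
    cr_vw _ _ _ _ _ _ _ _ _ (ne_of_gt hn0) hsum hrel1 hrel2
  have hcrwu : ((C 0 - X 0) * (A 1 - X 1) - (C 1 - X 1) * (A 0 - X 0)) = bb.coord 1 X * ((A 0 - X 0) * (B 1 - X 1) - (A 1 - X 1) * (B 0 - X 0) + ((B 0 - X 0) * (C 1 - X 1) - (B 1 - X 1) * (C 0 - X 0)) + ((C 0 - X 0) * (A 1 - X 1) - (C 1 - X 1) * (A 0 - X 0))) :=
    cr_wu _ _ _ _ _ _ _ _ _ (ne_of_gt hn0) hsum hrel1 hrel2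
  have h4 : (|((A 0 - X 0) * (B 1 - X 1) - (A 1 - X 1) * (B 0 - X 0) + ((B 0 - X 0) * (C 1 - X 1) - (B 1 - X 1) * (C 0 - X 0)) + ((C 0 - X 0) * (A 1 - X 1) - (C 1 - X 1) * (A 0 - X 0)))| : ℝ) ^ 2 = ((A 0 - X 0) * (B 1 - X 1) - (A 1 - X 1) * (B 0 - X 0) + ((B 0 - X 0) * (C 1 - X 1) - (B 1 - X 1) * (C 0 - X 0)) + ((C 0 - X 0) * (A 1 - X 1) - (C 1 - X 1) * (A 0 - X 0))) ^ 2 := sq_abs _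
  -- cosines
  have hcos_a : Real.cos ψa = ((B 0 - X 0) * (C 0 - X 0) + (B 1 - X 1) * (C 1 - X 1)) / (‖B - X‖ * ‖C - X‖) := by
    rw [← hψa, EuclideanGeometry.angle, InnerProductGeometry.cos_angle, innereq]
    simp [vsub_eq_sub, hsub]
  have hcos_b : Real.cos ψb = ((C 0 - X 0) * (A 0 - X 0) + (C 1 - X 1) * (A 1 - X 1)) / (‖C - X‖ * ‖A - X‖) := by
    rw [← hψb, EuclideanGeometry.angle, InnerProductGeometry.cos_angle, innereq]
    simp [vsub_eq_sub, hsub]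
  have hπ := Real.pi_pos
  have hcosa_neg : Real.cos ψa < 0 :=
    Real.cos_neg_of_pi_div_two_lt_of_lt hψa1 (by linarith)
  have hcosb_neg : Real.cos ψb < 0 :=
    Real.cos_neg_of_pi_div_two_lt_of_lt hψb1 (by linarith)
  have hbc : ‖B - X‖ * ‖C - X‖ ≠ 0 := by
    intro h; rw [h, div_zero] at hcos_a; linarith
  have hca : ‖C - X‖ * ‖A - X‖ ≠ 0 := by
    intro h; rw [h, div_zero] at hcos_b; linarith
  have hnb : ‖B - X‖ ≠ 0 := fun h => hbc (by rw [h, zero_mul])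
  have hnc : ‖C - X‖ ≠ 0 := fun h => hbc (by rw [h, mul_zero])
  have hna : ‖A - X‖ ≠ 0 := fun h => hca (by rw [h, mul_zero])
  have hnormu : ‖A - X‖ ^ 2 = ((A 0 - X 0) ^ 2 + (A 1 - X 1) ^ 2) := by rw [normsq]; simp [hsub]
  have hnormv : ‖B - X‖ ^ 2 = ((B 0 - X 0) ^ 2 + (B 1 - X 1) ^ 2) := by rw [normsq]; simp [hsub]
  have hnormw : ‖C - X‖ ^ 2 = ((C 0 - X 0) ^ 2 + (C 1 - X 1) ^ 2) := by rw [normsq]; simp [hsub]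
  -- sines
  have hsin_a : Real.sin ψa = bb.coord 0 X * |((A 0 - X 0) * (B 1 - X 1) - (A 1 - X 1) * (B 0 - X 0) + ((B 0 - X 0) * (C 1 - X 1) - (B 1 - X 1) * (C 0 - X 0)) + ((C 0 - X 0) * (A 1 - X 1) - (C 1 - X 1) * (A 0 - X 0)))| / (‖B - X‖ * ‖C - X‖) := by
    rw [Real.sin_eq_sqrt_one_sub_cos_sq (by linarith) (le_of_lt hψa2), hcos_a]
    rw [show 1 - (((B 0 - X 0) * (C 0 - X 0) + (B 1 - X 1) * (C 1 - X 1)) / (‖B - X‖ * ‖C - X‖)) ^ 2 =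
        (bb.coord 0 X * |((A 0 - X 0) * (B 1 - X 1) - (A 1 - X 1) * (B 0 - X 0) + ((B 0 - X 0) * (C 1 - X 1) - (B 1 - X 1) * (C 0 - X 0)) + ((C 0 - X 0) * (A 1 - X 1) - (C 1 - X 1) * (A 0 - X 0)))| / (‖B - X‖ * ‖C - X‖)) ^ 2 by
      field_simp
      linear_combination (norm := ring_nf) (((C 0 - X 0) ^ 2 + (C 1 - X 1) ^ 2)) * hnormv + (‖B - X‖^2) * hnormw
        + (((B 0 - X 0) * (C 1 - X 1) - (B 1 - X 1) * (C 0 - X 0)) + bb.coord 0 X * ((A 0 - X 0) * (B 1 - X 1) - (A 1 - X 1) * (B 0 - X 0) + ((B 0 - X 0) * (C 1 - X 1) - (B 1 - X 1) * (C 0 - X 0)) + ((C 0 - X 0) * (A 1 - X 1) - (C 1 - X 1) * (A 0 - X 0)))) * hcrvw - (bb.coord 0 X) ^ 2 * h4]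
    exact Real.sqrt_sq (by positivity)
  have hsin_b : Real.sin ψb = bb.coord 1 X * |((A 0 - X 0) * (B 1 - X 1) - (A 1 - X 1) * (B 0 - X 0) + ((B 0 - X 0) * (C 1 - X 1) - (B 1 - X 1) * (C 0 - X 0)) + ((C 0 - X 0) * (A 1 - X 1) - (C 1 - X 1) * (A 0 - X 0)))| / (‖C - X‖ * ‖A - X‖) := by
    rw [Real.sin_eq_sqrt_one_sub_cos_sq (by linarith) (le_of_lt hψb2), hcos_b]
    rw [show 1 - (((C 0 - X 0) * (A 0 - X 0) + (C 1 - X 1) * (A 1 - X 1)) / (‖C - X‖ * ‖A - X‖)) ^ 2 =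
        (bb.coord 1 X * |((A 0 - X 0) * (B 1 - X 1) - (A 1 - X 1) * (B 0 - X 0) + ((B 0 - X 0) * (C 1 - X 1) - (B 1 - X 1) * (C 0 - X 0)) + ((C 0 - X 0) * (A 1 - X 1) - (C 1 - X 1) * (A 0 - X 0)))| / (‖C - X‖ * ‖A - X‖)) ^ 2 by
      field_simp
      linear_combination (norm := ring_nf) (((A 0 - X 0) ^ 2 + (A 1 - X 1) ^ 2)) * hnormw + (‖C - X‖^2) * hnormu
        + (((C 0 - X 0) * (A 1 - X 1) - (C 1 - X 1) * (A 0 - X 0)) + bb.coord 1 X * ((A 0 - X 0) * (B 1 - X 1) - (A 1 - X 1) * (B 0 - X 0) + ((B 0 - X 0) * (C 1 - X 1) - (B 1 - X 1) * (C 0 - X 0)) + ((C 0 - X 0) * (A 1 - X 1) - (C 1 - X 1) * (A 0 - X 0)))) * hcrwu - (bb.coord 1 X) ^ 2 * h4]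
    exact Real.sqrt_sq (by positivity)
  have hsina_pos : 0 < Real.sin ψa := Real.sin_pos_of_pos_of_lt_pi (by linarith) hψa2
  have hsinb_pos : 0 < Real.sin ψb := Real.sin_pos_of_pos_of_lt_pi (by linarith) hψb2
  have ht : (|((A 0 - X 0) * (B 1 - X 1) - (A 1 - X 1) * (B 0 - X 0) + ((B 0 - X 0) * (C 1 - X 1) - (B 1 - X 1) * (C 0 - X 0)) + ((C 0 - X 0) * (A 1 - X 1) - (C 1 - X 1) * (A 0 - X 0)))| : ℝ) ≠ 0 := by
    intro h
    rw [hsin_a, h, mul_zero, zero_div] at hsina_pos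
    exact lt_irrefl 0 hsina_pos
  have hlt : bb.coord 0 X * |((A 0 - X 0) * (B 1 - X 1) - (A 1 - X 1) * (B 0 - X 0) + ((B 0 - X 0) * (C 1 - X 1) - (B 1 - X 1) * (C 0 - X 0)) + ((C 0 - X 0) * (A 1 - X 1) - (C 1 - X 1) * (A 0 - X 0)))| ≠ 0 := mul_ne_zero (ne_of_gt hl0) ht
  have hmt : bb.coord 1 X * |((A 0 - X 0) * (B 1 - X 1) - (A 1 - X 1) * (B 0 - X 0) + ((B 0 - X 0) * (C 1 - X 1) - (B 1 - X 1) * (C 0 - X 0)) + ((C 0 - X 0) * (A 1 - X 1) - (C 1 - X 1) * (A 0 - X 0)))| ≠ 0 := mul_ne_zero (ne_of_gt hm0) ht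
  -- cotangents
  have hcot_a : Real.cot ψa = ((B 0 - X 0) * (C 0 - X 0) + (B 1 - X 1) * (C 1 - X 1)) / (bb.coord 0 X * |((A 0 - X 0) * (B 1 - X 1) - (A 1 - X 1) * (B 0 - X 0) + ((B 0 - X 0) * (C 1 - X 1) - (B 1 - X 1) * (C 0 - X 0)) + ((C 0 - X 0) * (A 1 - X 1) - (C 1 - X 1) * (A 0 - X 0)))|) := by
    rw [Real.cot_eq_cos_div_sin, hcos_a, hsin_a]
    field_simp
  have hcot_b : Real.cot ψb = ((C 0 - X 0) * (A 0 - X 0) + (C 1 - X 1) * (A 1 - X 1)) / (bb.coord 1 X * |((A 0 - X 0) * (B 1 - X 1) - (A 1 - X 1) * (B 0 - X 0) + ((B 0 - X 0) * (C 1 - X 1) - (B 1 - X 1) * (C 0 - X 0)) + ((C 0 - X 0) * (A 1 - X 1) - (C 1 - X 1) * (A 0 - X 0)))|) := by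
    rw [Real.cot_eq_cos_div_sin, hcos_b, hsin_b]
    field_simp
  -- side squares
  have ha2 : a ^ 2 = ((B 0 - X 0) ^ 2 + (B 1 - X 1) ^ 2) + ((C 0 - X 0) ^ 2 + (C 1 - X 1) ^ 2) - 2 * ((B 0 - X 0) * (C 0 - X 0) + (B 1 - X 1) * (C 1 - X 1)) := by
    rw [ha, dist_eq_norm, normsq]; simp only [hsub]; ring
  have hb2 : b ^ 2 = ((C 0 - X 0) ^ 2 + (C 1 - X 1) ^ 2) + ((A 0 - X 0) ^ 2 + (A 1 - X 1) ^ 2) - 2 * ((C 0 - X 0) * (A 0 - X 0) + (C 1 - X 1) * (A 1 - X 1)) := by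
    rw [hb, dist_eq_norm, normsq]; simp only [hsub]; ring
  have hc2 : c ^ 2 = ((A 0 - X 0) ^ 2 + (A 1 - X 1) ^ 2) + ((B 0 - X 0) ^ 2 + (B 1 - X 1) ^ 2) - 2 * ((A 0 - X 0) * (B 0 - X 0) + (A 1 - X 1) * (B 1 - X 1)) := by
    rw [hc, dist_eq_norm, normsq]; simp only [hsub]; ring
  -- Heron / Theta
  have hprod : (a + b + c) * (a + c - b) * (b + c - a) * (a + b - c) = (2 * |((A 0 - X 0) * (B 1 - X 1) - (A 1 - X 1) * (B 0 - X 0) + ((B 0 - X 0) * (C 1 - X 1) - (B 1 - X 1) * (C 0 - X 0)) + ((C 0 - X 0) * (A 1 - X 1) - (C 1 - X 1) * (A 0 - X 0)))|) ^ 2 := by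
    rw [show (a + b + c) * (a + c - b) * (b + c - a) * (a + b - c) =
        4 * a ^ 2 * c ^ 2 - (a ^ 2 + c ^ 2 - b ^ 2) ^ 2 by ring, ha2, hb2, hc2]
    linear_combination (-4 : ℝ) * h4
  have hΘ2t : Θ2 = 2 * |((A 0 - X 0) * (B 1 - X 1) - (A 1 - X 1) * (B 0 - X 0) + ((B 0 - X 0) * (C 1 - X 1) - (B 1 - X 1) * (C 0 - X 0)) + ((C 0 - X 0) * (A 1 - X 1) - (C 1 - X 1) * (A 0 - X 0)))| := by
    rw [hΘ, hprod]
    exact Real.sqrt_sq (by positivity)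
  -- scalar relations
  have h1 : (((B 0 - X 0) ^ 2 + (B 1 - X 1) ^ 2)) * (((C 0 - X 0) ^ 2 + (C 1 - X 1) ^ 2)) = ((B 0 - X 0) * (C 0 - X 0) + (B 1 - X 1) * (C 1 - X 1)) ^ 2 + bb.coord 0 X ^ 2 * |((A 0 - X 0) * (B 1 - X 1) - (A 1 - X 1) * (B 0 - X 0) + ((B 0 - X 0) * (C 1 - X 1) - (B 1 - X 1) * (C 0 - X 0)) + ((C 0 - X 0) * (A 1 - X 1) - (C 1 - X 1) * (A 0 - X 0)))| ^ 2 := by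
    linear_combination (((B 0 - X 0) * (C 1 - X 1) - (B 1 - X 1) * (C 0 - X 0)) + bb.coord 0 X * ((A 0 - X 0) * (B 1 - X 1) - (A 1 - X 1) * (B 0 - X 0) + ((B 0 - X 0) * (C 1 - X 1) - (B 1 - X 1) * (C 0 - X 0)) + ((C 0 - X 0) * (A 1 - X 1) - (C 1 - X 1) * (A 0 - X 0)))) * hcrvw - bb.coord 0 X ^ 2 * h4
  have h2 : (((C 0 - X 0) ^ 2 + (C 1 - X 1) ^ 2)) * (((A 0 - X 0) ^ 2 + (A 1 - X 1) ^ 2)) = ((C 0 - X 0) * (A 0 - X 0) + (C 1 - X 1) * (A 1 - X 1)) ^ 2 + bb.coord 1 X ^ 2 * |((A 0 - X 0) * (B 1 - X 1) - (A 1 - X 1) * (B 0 - X 0) + ((B 0 - X 0) * (C 1 - X 1) - (B 1 - X 1) * (C 0 - X 0)) + ((C 0 - X 0) * (A 1 - X 1) - (C 1 - X 1) * (A 0 - X 0)))| ^ 2 := by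
    linear_combination (((C 0 - X 0) * (A 1 - X 1) - (C 1 - X 1) * (A 0 - X 0)) + bb.coord 1 X * ((A 0 - X 0) * (B 1 - X 1) - (A 1 - X 1) * (B 0 - X 0) + ((B 0 - X 0) * (C 1 - X 1) - (B 1 - X 1) * (C 0 - X 0)) + ((C 0 - X 0) * (A 1 - X 1) - (C 1 - X 1) * (A 0 - X 0)))) * hcrwu - bb.coord 1 X ^ 2 * h4
  have h5 : (((C 0 - X 0) ^ 2 + (C 1 - X 1) ^ 2)) * (((A 0 - X 0) * (B 0 - X 0) + (A 1 - X 1) * (B 1 - X 1))) = ((B 0 - X 0) * (C 0 - X 0) + (B 1 - X 1) * (C 1 - X 1)) * ((C 0 - X 0) * (A 0 - X 0) + (C 1 - X 1) * (A 1 - X 1)) - bb.coord 0 X * bb.coord 1 X * |((A 0 - X 0) * (B 1 - X 1) - (A 1 - X 1) * (B 0 - X 0) + ((B 0 - X 0) * (C 1 - X 1) - (B 1 - X 1) * (C 0 - X 0)) + ((C 0 - X 0) * (A 1 - X 1) - (C 1 - X 1) * (A 0 - X 0)))| ^ 2 := by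
    linear_combination (-(((C 0 - X 0) * (A 1 - X 1) - (C 1 - X 1) * (A 0 - X 0)))) * hcrvw - (bb.coord 0 X * ((A 0 - X 0) * (B 1 - X 1) - (A 1 - X 1) * (B 0 - X 0) + ((B 0 - X 0) * (C 1 - X 1) - (B 1 - X 1) * (C 0 - X 0)) + ((C 0 - X 0) * (A 1 - X 1) - (C 1 - X 1) * (A 0 - X 0)))) * hcrwu
      + bb.coord 0 X * bb.coord 1 X * h4
  have hsig : bb.coord 0 X * ((C 0 - X 0) * (A 0 - X 0) + (C 1 - X 1) * (A 1 - X 1)) + bb.coord 1 X * ((B 0 - X 0) * (C 0 - X 0) + (B 1 - X 1) * (C 1 - X 1)) +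
      (1 - bb.coord 0 X - bb.coord 1 X) * (((C 0 - X 0) ^ 2 + (C 1 - X 1) ^ 2)) = 0 := by
    linear_combination (C 0 - X 0) * hrel1 + (C 1 - X 1) * hrel2 - (((C 0 - X 0) ^ 2 + (C 1 - X 1) ^ 2)) * hsum
  have hz : (((C 0 - X 0) ^ 2 + (C 1 - X 1) ^ 2) : ℝ) ≠ 0 := by
    rw [← hnormw]; exact pow_ne_zero 2 hnc
  have hdistCX : dist C X ^ 2 = ((C 0 - X 0) ^ 2 + (C 1 - X 1) ^ 2) := by
    rw [dist_eq_norm, normsq]; simp [hsub]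
  rw [hcot_a, hcot_b, hΘ2t, ha2, hb2, hc2] at hden ⊢
  rw [hdistCX]
  exact alg_key (((B 0 - X 0) * (C 0 - X 0) + (B 1 - X 1) * (C 1 - X 1))) (((C 0 - X 0) * (A 0 - X 0) + (C 1 - X 1) * (A 1 - X 1))) (((A 0 - X 0) * (B 0 - X 0) + (A 1 - X 1) * (B 1 - X 1))) (((A 0 - X 0) ^ 2 + (A 1 - X 1) ^ 2)) (((B 0 - X 0) ^ 2 + (B 1 - X 1) ^ 2)) (((C 0 - X 0) ^ 2 + (C 1 - X 1) ^ 2)) (bb.coord 0 X) (bb.coord 1 X)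
    (|((A 0 - X 0) * (B 1 - X 1) - (A 1 - X 1) * (B 0 - X 0) + ((B 0 - X 0) * (C 1 - X 1) - (B 1 - X 1) * (C 0 - X 0)) + ((C 0 - X 0) * (A 1 - X 1) - (C 1 - X 1) * (A 0 - X 0)))|) hz (ne_of_gt hl0) (ne_of_gt hm0) ht h1 h2 h5 hsig hden
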